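/- Let G be a finite abelian group of type (n_1, …, n_r), i.e., G ≅ ℤ_{n_1} × ⋯ × ℤ_{n_r} with n_1 ≥ 2 and n_i dividing n_{i+1} for each i, and let n = n_1⋯n_r be its order. For all positive integers m ≤ n and h, ρ±(G, m, h) ≤ min{f_d(m, h) : d ∈ D(G, m)}, where D(G, m) = {d dividing n : d = d_1⋯d_r with each d_i dividing n_i and d·n_r ≥ d_r·m}. -/

import Mathlib

open Finset Pointwise

/-- The `h`-fold sumset of a finite subset `A` of an abelian group:
`hA = {Σ λ_a • a : λ : A → ℕ, Σ λ_a = h}`. -/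
def foldSumset {G : Type*} [AddCommGroup G] (h : ℕ) (A : Finset G) : Set G :=
  {g | ∃ c : G → ℕ, (∑ a ∈ A, c a) = h ∧ (∑ a ∈ A, c a • a) = g}

/-- The `h`-fold signed sumset of a finite subset `A` of an abelian group:
`h±A = {Σ λ_a • a : λ : A → ℤ, Σ |λ_a| = h}`. -/
def foldSignedSumset {G : Type*} [AddCommGroup G] (h : ℕ) (A : Finset G) : Set G :=
  {g | ∃ c : G → ℤ, (∑ a ∈ A, (c a).natAbs) = h ∧ (∑ a ∈ A, c a • a) = g}

/-- `ρ(G, m, h) = min {|hA| : A ⊆ G, |A| = m}`. -/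
noncomputable def rho (G : Type*) [AddCommGroup G] (m h : ℕ) : ℕ :=
  sInf {k | ∃ A : Finset G, A.card = m ∧ (foldSumset h A).ncard = k}

/-- `ρ±(G, m, h) = min {|h±A| : A ⊆ G, |A| = m}`. -/
noncomputable def rhoPM (G : Type*) [AddCommGroup G] (m h : ℕ) : ℕ :=
  sInf {k | ∃ A : Finset G, A.card = m ∧ (foldSignedSumset h A).ncard = k}

/-- `f_d(m, h) = (h⌈m/d⌉ - h + 1) d`. -/
def fdmh (d m h : ℕ) : ℕ := (h * ((m + d - 1) / d) - h + 1) * d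

/-- `u(n, m, h) = min {f_d(m, h) : d a positive divisor of n}`. -/
noncomputable def uFun (n m h : ℕ) : ℕ :=
  sInf {k | ∃ d : ℕ, 0 < d ∧ d ∣ n ∧ k = fdmh d m h}


private lemma dvd_small {t z : ℤ} (h : t ∣ z) (h2 : |z| < t) : z = 0 := by
  rcases h with ⟨q, rfl⟩
  have ht : 0 < t := lt_of_le_of_lt (abs_nonneg _) h2
  rw [abs_lt] at h2
  rcases lt_trichotomy q 0 with hq | hq | hq
  · nlinarith [h2.1]
  · simp [hq]
  · nlinarith [h2.2]

private lemma sum_mul_abs_le {α : Type*} (s : Finset α) (lam jf : α → ℤ) (M : ℤ)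
    (hM : ∀ a ∈ s, |jf a| ≤ M) :
    |∑ a ∈ s, lam a * jf a| ≤ (∑ a ∈ s, ((lam a).natAbs : ℤ)) * M := by
  refine (Finset.abs_sum_le_sum_abs _ _).trans ?_
  rw [Finset.sum_mul]
  refine Finset.sum_le_sum fun a ha => ?_
  rw [abs_mul, Int.natCast_natAbs]
  exact mul_le_mul_of_nonneg_left (hM a ha) (abs_nonneg _)

private lemma parity_sum {α : Type*} (s : Finset α) (lam jf : α → ℤ) (p : ℤ)
    (hp : ∀ a ∈ s, 2 ∣ jf a - p) :
    2 ∣ (∑ a ∈ s, lam a * jf a) - (∑ a ∈ s, ((lam a).natAbs : ℤ)) * p := by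
  rw [Finset.sum_mul, ← Finset.sum_sub_distrib]
  refine Finset.dvd_sum fun a ha => ?_
  have h1 : 2 ∣ lam a - ((lam a).natAbs : ℤ) := by omega
  have h2 : lam a * jf a - ((lam a).natAbs : ℤ) * p
      = lam a * (jf a - p) + (lam a - ((lam a).natAbs : ℤ)) * p := by ring
  rw [h2]
  exact dvd_add (Dvd.dvd.mul_left (hp a ha) _) (Dvd.dvd.mul_right h1 _)

private lemma exists_single {α : Type*} (s : Finset α) (lam : α → ℤ)
    (h : ∑ a ∈ s, (lam a).natAbs = 1) :
    ∃ a₀ ∈ s, (lam a₀ = 1 ∨ lam a₀ = -1) ∧ ∀ b ∈ s, b ≠ a₀ → lam b = 0 := by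
  classical
  have hex : ∃ a ∈ s, (lam a).natAbs ≠ 0 := by
    by_contra hc
    push_neg at hc
    rw [Finset.sum_eq_zero (fun a ha => hc a ha)] at h
    omega
  obtain ⟨a₀, ha₀, hne⟩ := hex
  have hsplit : (lam a₀).natAbs + ∑ b ∈ s.erase a₀, (lam b).natAbs
      = ∑ a ∈ s, (lam a).natAbs := Finset.add_sum_erase s (fun a => (lam a).natAbs) ha₀
  rw [h] at hsplit
  have h2 : ∑ b ∈ s.erase a₀, (lam b).natAbs = 0 := by omega
  refine ⟨a₀, ha₀, by omega, fun b hb hbne => ?_⟩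
  have : (lam b).natAbs = 0 :=
    Finset.sum_eq_zero_iff.mp h2 b (Finset.mem_erase.mpr ⟨hbne, hb⟩)
  omega

private lemma exists_good_A {G : Type*} [AddCommGroup G] [Fintype G]
    (H : AddSubgroup G) (g : G) (h m : ℕ) (J V : Finset ℤ)
    (hinj : ∀ j ∈ J, ∀ j' ∈ J, (j - j') • g ∈ H → j = j')
    (hJV : ∀ (s : Finset G) (lam jf : G → ℤ), (∀ a ∈ s, jf a ∈ J) →
        (∑ a ∈ s, (lam a).natAbs) = h →
        ∃ v ∈ V, ((∑ a ∈ s, lam a * jf a) - v) • g ∈ H)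
    (hm : m ≤ J.card * Nat.card H) :
    ∃ A : Finset G, A.card = m ∧ (foldSignedSumset h A).ncard ≤ V.card * Nat.card H := by
  classical
  set Hf : Finset G := (H : Set G).toFinset with hHf
  have hHfcard : Hf.card = Nat.card H := by
    rw [hHf, Set.toFinset_card, Nat.card_eq_fintype_card]
    rfl
  have hmemHf : ∀ x, x ∈ Hf ↔ x ∈ H := fun x => Set.mem_toFinset
  set U : Finset G := J.biUnion (fun j => Hf.image (fun x => j • g + x)) with hU
  have hUcard : U.card = J.card * Nat.card H := by
    rw [hU, Finset.card_biUnion]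
    · rw [← hHfcard]
      rw [Finset.sum_congr rfl (fun j _ => Finset.card_image_of_injective Hf
        (fun x y hxy => by simpa using hxy))]
      rw [Finset.sum_const, smul_eq_mul]
    · intro j hj j' hj' hne
      rw [Function.onFun, Finset.disjoint_left]
      rintro a ha ha'
      rw [Finset.mem_image] at ha ha'
      obtain ⟨x, hx, rfl⟩ := ha
      obtain ⟨x', hx', heq⟩ := ha'
      refine hne (hinj j hj j' hj' ?_)
      have hsub2 : (j - j') • g = x' - x := by
        rw [sub_smul]
        have h3 : j' • g + x' = j • g + x := heq
        have : j • g = j' • g + x' - x := by rw [h3]; abel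
        rw [this]; abel
      rw [hsub2]
      exact H.sub_mem ((hmemHf x').1 hx') ((hmemHf x).1 hx)
  obtain ⟨A, hAU, hAcard⟩ := Finset.exists_subset_card_eq (s := U) (n := m) (by rw [hUcard]; exact hm)
  refine ⟨A, hAcard, ?_⟩
  set W : Finset G := V.biUnion (fun v => Hf.image (fun x => v • g + x)) with hW
  have hsub : foldSignedSumset h A ⊆ ↑W := by
    rintro x ⟨lam, hlam, rfl⟩
    have hex : ∀ a : G, ∃ j : ℤ, a ∈ A → (j ∈ J ∧ a - j • g ∈ H) := by
      intro a
      by_cases ha : a ∈ A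
      · have := hAU ha
        rw [hU, Finset.mem_biUnion] at this
        obtain ⟨j, hj, hmem⟩ := this
        rw [Finset.mem_image] at hmem
        obtain ⟨y, hy, rfl⟩ := hmem
        exact ⟨j, fun _ => ⟨hj, by simpa using (hmemHf y).1 hy⟩⟩
      · exact ⟨0, fun h' => absurd h' ha⟩
    choose jf hjf using hex
    obtain ⟨v, hv, hvH⟩ := hJV A lam jf (fun a ha => (hjf a ha).1) hlam
    rw [Finset.mem_coe, hW, Finset.mem_biUnion]
    refine ⟨v, hv, ?_⟩
    rw [Finset.mem_image]
    refine ⟨(∑ a ∈ A, lam a • a) - v • g, ?_, by abel⟩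
    rw [hmemHf]
    have hdecomp : (∑ a ∈ A, lam a • a) - v • g
        = ((∑ a ∈ A, lam a * jf a) - v) • g + ∑ a ∈ A, lam a • (a - jf a • g) := by
      have h1 : ∀ a ∈ A, lam a • (a - jf a • g) = lam a • a - (lam a * jf a) • g := by
        intro a _
        rw [smul_sub, smul_smul]
      rw [Finset.sum_congr rfl h1, Finset.sum_sub_distrib, sub_smul, ← Finset.sum_smul]
      abel
    rw [hdecomp]
    exact H.add_mem hvH
      (AddSubgroup.sum_mem _ fun a ha => AddSubgroup.zsmul_mem _ ((hjf a ha).2) _)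
  calc (foldSignedSumset h A).ncard ≤ (↑W : Set G).ncard :=
        Set.ncard_le_ncard hsub (Set.toFinite _)
    _ = W.card := Set.ncard_coe_finset W
    _ ≤ ∑ v ∈ V, (Hf.image (fun x => v • g + x)).card := Finset.card_biUnion_le
    _ ≤ ∑ _v ∈ V, Nat.card H :=
        Finset.sum_le_sum fun v _ => (Finset.card_image_le).trans_eq hHfcard
    _ = V.card * Nat.card H := by rw [Finset.sum_const, smul_eq_mul]

private lemma key_construction {G : Type*} [AddCommGroup G] [Fintype G]
    (H : AddSubgroup G) (g : G) (t d m h c : ℕ)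
    (hh : 0 < h) (hc : 0 < c)
    (hcard : Nat.card H = d)
    (hdvd : ∀ z : ℤ, z • g ∈ H → (t : ℤ) ∣ z)
    (htg : (t : ℤ) • g ∈ H)
    (hct : c ≤ t) (hmcd : m ≤ c * d) :
    ∃ A : Finset G, A.card = m ∧ (foldSignedSumset h A).ncard ≤ (h * (c - 1) + 1) * d := by
  have ht : 0 < t := lt_of_lt_of_le hc hct
  have main : ∀ J V : Finset ℤ, J.card = c → V.card ≤ h * (c - 1) + 1 →
      (∀ j ∈ J, ∀ j' ∈ J, (j - j') • g ∈ H → j = j') →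
      (∀ (s : Finset G) (lam jf : G → ℤ), (∀ a ∈ s, jf a ∈ J) →
        (∑ a ∈ s, (lam a).natAbs) = h →
        ∃ v ∈ V, ((∑ a ∈ s, lam a * jf a) - v) • g ∈ H) →
      ∃ A : Finset G, A.card = m ∧ (foldSignedSumset h A).ncard ≤ (h * (c - 1) + 1) * d := by
    intro J V hJc hVc hinj hJV
    obtain ⟨A, h1, h2⟩ := exists_good_A H g h m J V hinj hJV
      (by rw [hJc, hcard]; exact hmcd)
    exact ⟨A, h1, h2.trans (by rw [hcard]; exact Nat.mul_le_mul_right d hVc)⟩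
  have hinj_of_lt : ∀ J : Finset ℤ, (∀ j ∈ J, ∀ j' ∈ J, |j - j'| < (t : ℤ)) →
      ∀ j ∈ J, ∀ j' ∈ J, (j - j') • g ∈ H → j = j' := by
    intro J hb j hj j' hj' hmem
    have := dvd_small (hdvd _ hmem) (hb j hj j' hj')
    omega
  by_cases hcase : t ≤ h * (c - 1) + 1
  · -- Case 2: everything fits in the subgroup generated by g and H
    refine main (Finset.Ico (0 : ℤ) (c : ℤ)) (Finset.Ico (0 : ℤ) (t : ℤ)) ?_ ?_ ?_ ?_
    · rw [Int.card_Ico]; omega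
    · rw [Int.card_Ico]; omega
    · refine hinj_of_lt _ ?_
      intro j hj j' hj'
      rw [Finset.mem_Ico] at hj hj'
      have : (c : ℤ) ≤ (t : ℤ) := by exact_mod_cast hct
      rw [abs_lt]
      omega
    · intro s lam jf hjmem hsum
      set S := ∑ a ∈ s, lam a * jf a with hS
      refine ⟨S % (t : ℤ), ?_, ?_⟩
      · rw [Finset.mem_Ico]
        have h1 := Int.emod_nonneg S (by exact_mod_cast ht.ne' : (t : ℤ) ≠ 0)
        have h2 := Int.emod_lt_of_pos S (by exact_mod_cast ht : (0 : ℤ) < t)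
        exact ⟨h1, h2⟩
      · have h3 : S - S % (t : ℤ) = (S / (t : ℤ)) * (t : ℤ) := by
          rw [Int.emod_def]
          ring
        rw [h3, mul_smul]
        exact AddSubgroup.zsmul_mem _ htg _
  · push_neg at hcase
    by_cases hone : h = 1
    · -- h = 1 : use a symmetric set of coset representatives
      subst hone
      have htgtc : c < t := by omega
      have key1 : ∀ J : Finset ℤ, J.card = c →
          (∀ j ∈ J, -(c : ℤ) ≤ 2 * j ∧ 2 * j ≤ (c : ℤ)) →
          (∀ j ∈ J, -j ∈ J) →
          ∃ A : Finset G, A.card = m ∧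
            (foldSignedSumset 1 A).ncard ≤ (1 * (c - 1) + 1) * d := by
        intro J hJc hbnd hsym
        refine main J J hJc (by omega) ?_ ?_
        · refine hinj_of_lt _ ?_
          intro j hj j' hj'
          have b1 := hbnd j hj
          have b2 := hbnd j' hj'
          have : (c : ℤ) < (t : ℤ) := by exact_mod_cast htgtc
          rw [abs_lt]
          omega
        · intro s lam jf hjmem hsum
          obtain ⟨a₀, ha₀, hpm, hzero⟩ := exists_single s lam hsum
          have hSe : ∑ a ∈ s, lam a * jf a = lam a₀ * jf a₀ :=
            Finset.sum_eq_single_of_mem a₀ ha₀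
              (fun b hb hbne => by rw [hzero b hb hbne, zero_mul])
          have hj₀ : jf a₀ ∈ J := hjmem a₀ ha₀
          rcases hpm with h1 | h1
          · refine ⟨jf a₀, hj₀, ?_⟩
            rw [hSe, h1, one_mul, sub_self, zero_smul]
            exact H.zero_mem
          · refine ⟨-jf a₀, hsym _ hj₀, ?_⟩
            have : (∑ a ∈ s, lam a * jf a) - -jf a₀ = 0 := by rw [hSe, h1]; ring
            rw [this, zero_smul]
            exact H.zero_mem
      rcases Nat.even_or_odd c with hce | hco
      · -- c even : J = [-w, w] \ {0}
        obtain ⟨w, hw⟩ := hce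
        have hw1 : 1 ≤ w := by omega
        refine key1 ((Finset.Icc (-(w : ℤ)) (w : ℤ)).erase 0) ?_ ?_ ?_
        · rw [Finset.card_erase_of_mem (by simp), Int.card_Icc]
          omega
        · intro j hj
          rw [Finset.mem_erase, Finset.mem_Icc] at hj
          omega
        · intro j hj
          rw [Finset.mem_erase, Finset.mem_Icc] at hj ⊢
          omega
      · -- c odd : J = [-k, k]
        obtain ⟨k, hk⟩ := hco
        refine key1 (Finset.Icc (-(k : ℤ)) (k : ℤ)) ?_ ?_ ?_
        · rw [Int.card_Icc]; omega
        · intro j hj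
          rw [Finset.mem_Icc] at hj
          omega
        · intro j hj
          rw [Finset.mem_Icc] at hj ⊢
          omega
    · -- h ≥ 2 : symmetric arithmetic progression with difference 2
      have h2 : 2 ≤ h := by omega
      set p : ℤ := (c : ℤ) - 1 with hp
      set Mz : ℤ := (h : ℤ) * p with hMz
      have hp0 : 0 ≤ p := by
        have : (1 : ℤ) ≤ (c : ℤ) := by exact_mod_cast hc
        omega
      have hMzc : ((h * (c - 1) : ℕ) : ℤ) = Mz := by
        rw [hMz, hp]
        push_cast [Nat.cast_sub hc]
        ring
      have hMz2p : 2 * p ≤ Mz := by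
        rw [hMz]
        nlinarith [show (2 : ℤ) ≤ (h : ℤ) from by exact_mod_cast h2]
      have htMz : Mz + 2 ≤ (t : ℤ) := by
        have : (h * (c - 1) + 1 : ℕ) < t := hcase
        omega
      have hinj2 : Function.Injective (fun i : ℤ => 2 * i - p) := by
        intro a b hab
        simp only at hab
        omega
      have hinjM : Function.Injective (fun i : ℤ => 2 * i - Mz) := by
        intro a b hab
        simp only at hab
        omega
      refine main ((Finset.Icc (0 : ℤ) p).image (fun i => 2 * i - p))
        ((Finset.Icc (0 : ℤ) Mz).image (fun i => 2 * i - Mz)) ?_ ?_ ?_ ?_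
      · rw [Finset.card_image_of_injective _ hinj2, Int.card_Icc]
        omega
      · rw [Finset.card_image_of_injective _ hinjM, Int.card_Icc]
        omega
      · refine hinj_of_lt _ ?_
        intro j hj j' hj'
        rw [Finset.mem_image] at hj hj'
        obtain ⟨i, hi, rfl⟩ := hj
        obtain ⟨i', hi', rfl⟩ := hj'
        rw [Finset.mem_Icc] at hi hi'
        rw [abs_lt]
        omega
      · intro s lam jf hjmem hsum
        have hbnd : ∀ a ∈ s, |jf a| ≤ p := by
          intro a ha
          have := hjmem a ha
          rw [Finset.mem_image] at this
          obtain ⟨i, hi, hieq⟩ := this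
          rw [Finset.mem_Icc] at hi
          rw [abs_le]
          omega
        have hpar : ∀ a ∈ s, 2 ∣ jf a - p := by
          intro a ha
          have := hjmem a ha
          rw [Finset.mem_image] at this
          obtain ⟨i, hi, hieq⟩ := this
          omega
        have habs := sum_mul_abs_le s lam jf p hbnd
        have hpar2 := parity_sum s lam jf p hpar
        have hcast : (∑ a ∈ s, ((lam a).natAbs : ℤ)) = (h : ℤ) := by
          rw [← Nat.cast_sum, hsum]
        rw [hcast] at habs hpar2
        set S := ∑ a ∈ s, lam a * jf a with hSdef
        refine ⟨S, ?_, by rw [sub_self, zero_smul]; exact H.zero_mem⟩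
        rw [Finset.mem_image]
        refine ⟨(S + Mz) / 2, ?_, ?_⟩
        · rw [Finset.mem_Icc]
          rw [abs_le] at habs
          constructor
          · omega
          · omega
        · rw [abs_le] at habs
          omega

/-- `ρ±(G, m, h) ≤ min {f_d(m, h) : d ∈ D(G, m)}` for a group `G` of
type `(n_1, …, n_r)`. -/
theorem rhoPM_le_min_fdmh_DGm (r : ℕ) (hr : 0 < r) (n : Fin r → ℕ)
    (hn1 : 2 ≤ n ⟨0, hr⟩)
    (hchain : ∀ i : Fin r, ∀ hi : i.val + 1 < r, n i ∣ n ⟨i.val + 1, hi⟩)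
    (G : Type*) [AddCommGroup G] [Fintype G]
    (e : G ≃+ ((i : Fin r) → ZMod (n i)))
    (m h : ℕ) (hm : 0 < m) (hmn : m ≤ ∏ i, n i) (hh : 0 < h) :
    rhoPM G m h ≤
      sInf {k | ∃ d : ℕ, d ∣ ∏ i, n i ∧
        (∃ di : Fin r → ℕ, (∀ i, di i ∣ n i) ∧ d = ∏ i, di i ∧
          di ⟨r - 1, by omega⟩ * m ≤ d * n ⟨r - 1, by omega⟩) ∧
        k = fdmh d m h} := by
  classical
  have hr' : r - 1 < r := by omega
  set r' : Fin r := ⟨r - 1, hr'⟩ with hr'def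
  have hnpos : ∀ i, 0 < n i := by
    intro i
    rcases Nat.eq_zero_or_pos (n i) with h0 | h0
    · exfalso
      have : ∏ i, n i = 0 := Finset.prod_eq_zero (Finset.mem_univ i) h0
      omega
    · exact h0
  have hmem : sInf {k | ∃ d : ℕ, d ∣ ∏ i, n i ∧
        (∃ di : Fin r → ℕ, (∀ i, di i ∣ n i) ∧ d = ∏ i, di i ∧
          di ⟨r - 1, by omega⟩ * m ≤ d * n ⟨r - 1, by omega⟩) ∧
        k = fdmh d m h} ∈ {k | ∃ d : ℕ, d ∣ ∏ i, n i ∧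
        (∃ di : Fin r → ℕ, (∀ i, di i ∣ n i) ∧ d = ∏ i, di i ∧
          di ⟨r - 1, by omega⟩ * m ≤ d * n ⟨r - 1, by omega⟩) ∧
        k = fdmh d m h} :=
    Nat.sInf_mem ⟨fdmh (∏ i, n i) m h, ∏ i, n i, dvd_rfl,
      ⟨n, fun i => dvd_rfl, rfl, by
        rw [mul_comm ((∏ i, n i)) (n ⟨r - 1, by omega⟩)]
        exact Nat.mul_le_mul_left _ hmn⟩, rfl⟩
  obtain ⟨d, hdvdn, ⟨di, hdidvd, hdprod, hdlast'⟩, hEq⟩ := hmem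
  have hdlast : di r' * m ≤ d * n r' := hdlast'
  rw [hEq]
  clear hEq hdlast'
  have hdipos : ∀ i, 0 < di i := fun i => Nat.pos_of_dvd_of_pos (hdidvd i) (hnpos i)
  have hdpos : 0 < d := hdprod ▸ Finset.prod_pos (fun i _ => hdipos i)
  set t := n r' / di r' with htdef
  have hti : di r' * t = n r' := Nat.mul_div_cancel' (hdidvd r')
  have htpos : 0 < t := Nat.div_pos (Nat.le_of_dvd (hnpos r') (hdidvd r')) (hdipos r')
  haveI : NeZero t := ⟨htpos.ne'⟩
  have htdvd : t ∣ n r' := ⟨di r', by rw [← hti]; ring⟩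
  set c := (m - 1) / d + 1 with hcdef
  have hcpos : 0 < c := Nat.succ_pos _
  have hmcd : m ≤ c * d := by
    have h1 : (m - 1) / d < c := Nat.lt_succ_self _
    have h2 := (Nat.div_lt_iff_lt_mul hdpos).mp h1
    omega
  have hmdt : m ≤ d * t := by
    have h1 : di r' * m ≤ di r' * (d * t) := by
      calc di r' * m ≤ d * n r' := hdlast
        _ = di r' * (d * t) := by rw [← hti]; ring
    exact Nat.le_of_mul_le_mul_left h1 (hdipos r')
  have hct : c ≤ t := by
    have h1 : m - 1 < t * d := by
      have : d * t = t * d := by ring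
      omega
    have h2 : (m - 1) / d < t := (Nat.div_lt_iff_lt_mul hdpos).mpr h1
    omega
  have hfd : fdmh d m h = (h * (c - 1) + 1) * d := by
    rw [fdmh]
    congr 1
    have h1 : (m + d - 1) / d = c := by
      rw [hcdef]
      have h2 : m + d - 1 = (m - 1) + d := by omega
      rw [h2, Nat.add_div_right _ hdpos]
    rw [h1]
    have h2 : h * c = h * (c - 1) + h := by
      conv_lhs => rw [show c = (c - 1) + 1 by omega]
      rw [Nat.mul_succ]
    omega
  -- Set up the subgroup and the element in the product group, pulled back to G
  haveI : ∀ i, NeZero (n i) := fun i => ⟨(hnpos i).ne'⟩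
  set a : ∀ i, ZMod (n i) := fun i => ((n i / di i : ℕ) : ZMod (n i)) with ha
  set H₀ : AddSubgroup ((i : Fin r) → ZMod (n i)) :=
    AddSubgroup.pi Set.univ (fun i => AddSubgroup.zmultiples (a i)) with hH₀
  set g₀ : (i : Fin r) → ZMod (n i) := Pi.single r' 1 with hg₀
  set H : AddSubgroup G := H₀.comap e.toAddMonoidHom with hH
  set gG : G := e.symm g₀ with hgG
  have hmemH : ∀ x : G, x ∈ H ↔ e x ∈ H₀ := fun x => Iff.rfl
  have hcardH : Nat.card H = d := by
    have e1 : H₀ ≃ ((i : Fin r) → AddSubgroup.zmultiples (a i)) :=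
      { toFun := fun x i => ⟨x.1 i, ((AddSubgroup.mem_pi _).mp x.2) i (Set.mem_univ i)⟩
        invFun := fun y => ⟨fun i => (y i).1, (AddSubgroup.mem_pi _).mpr (fun i _ => (y i).2)⟩
        left_inv := fun x => rfl
        right_inv := fun y => rfl }
    have e2 : H ≃ H₀ := Equiv.subtypeEquiv e.toEquiv (fun x => Iff.rfl)
    rw [Nat.card_congr e2, Nat.card_congr e1, Nat.card_pi, hdprod]
    refine Finset.prod_congr rfl (fun i _ => ?_)
    rw [Nat.card_zmultiples]
    show addOrderOf ((n i / di i : ℕ) : ZMod (n i)) = di i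
    rw [ZMod.addOrderOf_coe _ (hnpos i).ne']
    rw [Nat.gcd_eq_right (Nat.div_dvd_of_dvd (hdidvd i))]
    exact Nat.div_div_self (hdidvd i) (hnpos i).ne'
  have hzg : ∀ z : ℤ, z • gG = e.symm (z • g₀) := by
    intro z
    exact (map_zsmul e.symm.toAddMonoidHom z g₀).symm
  have hcast : ∀ z : ℤ, z • gG ∈ H → (t : ℤ) ∣ z := by
    intro z hz
    have h1 : z • g₀ ∈ H₀ := by
      have h2 := (hmemH _).mp hz
      rw [hzg z] at h2
      rwa [AddEquiv.apply_symm_apply] at h2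
    have h2 := ((AddSubgroup.mem_pi _).mp h1) r' (Set.mem_univ r')
    have h3 : (z • g₀) r' = ((z : ℤ) : ZMod (n r')) := by
      rw [hg₀, Pi.smul_apply, Pi.single_eq_same, zsmul_eq_mul, mul_one]
    rw [h3] at h2
    rw [AddSubgroup.mem_zmultiples_iff] at h2
    obtain ⟨k, hk⟩ := h2
    have h4 := congrArg (ZMod.castHom htdvd (ZMod t)) hk
    rw [map_zsmul, map_intCast] at h4
    have h5 : (ZMod.castHom htdvd (ZMod t)) (a r') = 0 := by
      show (ZMod.castHom htdvd (ZMod t)) ((t : ℕ) : ZMod (n r')) = 0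
      rw [map_natCast, ZMod.natCast_self]
    rw [h5, smul_zero] at h4
    rw [← ZMod.intCast_zmod_eq_zero_iff_dvd]
    exact h4.symm
  have htg : (t : ℤ) • gG ∈ H := by
    rw [hmemH, hzg, AddEquiv.apply_symm_apply]
    refine (AddSubgroup.mem_pi _).mpr (fun i _ => ?_)
    rw [hg₀, Pi.smul_apply]
    rcases eq_or_ne i r' with rfl | hne
    · rw [Pi.single_eq_same]
      have h6 : ((t : ℤ)) • (1 : ZMod (n r')) = a r' := by
        rw [zsmul_eq_mul, mul_one]
        show ((t : ℤ) : ZMod (n r')) = ((n r' / di r' : ℕ) : ZMod (n r'))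
        rw [htdef]
        exact Int.cast_natCast _
      rw [h6]
      exact AddSubgroup.mem_zmultiples _
    · rw [Pi.single_eq_of_ne hne, smul_zero]
      exact zero_mem _
  obtain ⟨A, hAcard, hAle⟩ :=
    key_construction H gG t d m h c hh hcpos hcardH hcast htg hct hmcd
  have hrho : rhoPM G m h ≤ (foldSignedSumset h A).ncard :=
    Nat.sInf_le ⟨A, hAcard, rfl⟩
  rw [hfd]
  exact hrho.trans hAle
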